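/- Let M be a skew-symmetric 6×6 matrix of linear forms over ℂ which has skew format (d), i.e. for some S₀ ∈ GL(6,ℂ) the matrix S₀·M·S₀ᵀ is block-diagonal with two skew-symmetric 3×3 blocks of linear forms, and suppose M is stable in the sense that it has none of the skew formats NS₁, NS₂, NS₃. Then there exist S ∈ GL(6,ℂ) and linear forms l₀,l₁,l₂,m₀,m₁,m₂ with {l₀,l₁,l₂} linearly independent and {m₀,m₁,m₂} linearly independent, such that S·M·Sᵀ is the block-diagonal matrix with blocks [[0,l₀,l₁],[−l₀,0,l₂],[−l₁,−l₂,0]] and [[0,m₀,m₁],[−m₀,0,m₂],[−m₁,−m₂,0]]. -/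

import Mathlib

open Matrix MvPolynomial

noncomputable section

/-- The polynomial ring `ℂ[x₀,…,x_{n-1}]`. -/
abbrev CPoly (n : ℕ) := MvPolynomial (Fin n) ℂ

/-- All entries of the matrix are linear forms (homogeneous of degree 1, possibly 0). -/
def LinForms {k n : ℕ} (M : Matrix (Fin k) (Fin k) (CPoly n)) : Prop :=
  ∀ i j, (M i j).IsHomogeneous 1

/-- Skew-symmetric matrix with zero diagonal. -/
def IsSkewMat {k n : ℕ} (M : Matrix (Fin k) (Fin k) (CPoly n)) : Prop :=
  Mᵀ = -M ∧ ∀ i, M i i = 0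

/-- Congruence action `M ↦ S·M·Sᵀ` of a constant matrix `S` on a matrix of polynomials. -/
def Congr {k n : ℕ} (S : Matrix (Fin k) (Fin k) ℂ) (M : Matrix (Fin k) (Fin k) (CPoly n)) :
    Matrix (Fin k) (Fin k) (CPoly n) :=
  S.map MvPolynomial.C * M * (S.map MvPolynomial.C)ᵀ

/-- `M` has skew format `P` : some congruent matrix `S·M·Sᵀ` (with `S` invertible) has form `P`. -/
def HasFmt {k n : ℕ} (P : Matrix (Fin k) (Fin k) (CPoly n) → Prop)
    (M : Matrix (Fin k) (Fin k) (CPoly n)) : Prop :=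
  ∃ S : Matrix (Fin k) (Fin k) ℂ, IsUnit S.det ∧ P (Congr S M)

/-- A `6×6` matrix built from four `3×3` blocks. -/
def blk {n : ℕ} (A B C D : Matrix (Fin 3) (Fin 3) (CPoly n)) :
    Matrix (Fin 6) (Fin 6) (CPoly n) :=
  Matrix.reindex finSumFinEquiv finSumFinEquiv (Matrix.fromBlocks A B C D)

/-- Format (a): the row and column of index 5 are zero. -/
def FormA {n : ℕ} (N : Matrix (Fin 6) (Fin 6) (CPoly n)) : Prop :=
  ∀ i, N i 5 = 0 ∧ N 5 i = 0

/-- Format (b): `m_{ij} = 0` for all `i, j ∈ {2,3,4,5}`. -/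
def FormB {n : ℕ} (N : Matrix (Fin 6) (Fin 6) (CPoly n)) : Prop :=
  ∀ i j : Fin 6, 2 ≤ (i : ℕ) → 2 ≤ (j : ℕ) → N i j = 0

/-- Format (c): `m_{ij} = 0` whenever `i ≥ 1, j ≥ 4` or `i ≥ 4, j ≥ 1`. -/
def FormC {n : ℕ} (N : Matrix (Fin 6) (Fin 6) (CPoly n)) : Prop :=
  ∀ i j : Fin 6, ((1 ≤ (i : ℕ) ∧ 4 ≤ (j : ℕ)) ∨ (4 ≤ (i : ℕ) ∧ 1 ≤ (j : ℕ))) → N i j = 0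

/-- Format (d): `m_{ij} = 0` whenever exactly one of `i, j` is `≤ 2`. -/
def FormD {n : ℕ} (N : Matrix (Fin 6) (Fin 6) (CPoly n)) : Prop :=
  ∀ i j : Fin 6, (((i : ℕ) ≤ 2 ∧ 3 ≤ (j : ℕ)) ∨ (3 ≤ (i : ℕ) ∧ (j : ℕ) ≤ 2)) → N i j = 0

/-- Double skew format (e): `N = [[N₀,N₁],[N₁,0]]` with `N₀, N₁` skew `3×3` of linear forms. -/
def FormE {n : ℕ} (N : Matrix (Fin 6) (Fin 6) (CPoly n)) : Prop :=
  ∃ N0 N1 : Matrix (Fin 3) (Fin 3) (CPoly n),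
    IsSkewMat N0 ∧ IsSkewMat N1 ∧ LinForms N0 ∧ LinForms N1 ∧ N = blk N0 N1 N1 0

/-- Double skew format (f): `N = [[N₀,N₁],[N₁,N₂]]` with `N₁` skew `3×3` of linear forms,
`N₀ = [[0,p,0],[−p,0,0],[0,0,0]]`, `N₂ = [[0,q,0],[−q,0,0],[0,0,0]]`. -/
def FormF {n : ℕ} (N : Matrix (Fin 6) (Fin 6) (CPoly n)) : Prop :=
  ∃ (N1 : Matrix (Fin 3) (Fin 3) (CPoly n)) (p q : CPoly n),
    IsSkewMat N1 ∧ LinForms N1 ∧ p.IsHomogeneous 1 ∧ q.IsHomogeneous 1 ∧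
    N = blk !![0, p, 0; -p, 0, 0; 0, 0, 0] N1 N1 !![0, q, 0; -q, 0, 0; 0, 0, 0]

/-- Comaschi format NS₁: `m_{0j} = 0` for all `j ≤ 4`. -/
def FormNS1 {n : ℕ} (N : Matrix (Fin 6) (Fin 6) (CPoly n)) : Prop :=
  ∀ j : Fin 6, (j : ℕ) ≤ 4 → N 0 j = 0

/-- Comaschi format NS₂: `m_{ij} = 0` for all `i ∈ {0,1}`, `j ∈ {0,1,2,3}`. -/
def FormNS2 {n : ℕ} (N : Matrix (Fin 6) (Fin 6) (CPoly n)) : Prop :=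
  ∀ i j : Fin 6, (i : ℕ) ≤ 1 → (j : ℕ) ≤ 3 → N i j = 0

/-- Comaschi format NS₃: `m_{ij} = 0` for all `i, j ∈ {0,1,2}`. -/
def FormNS3 {n : ℕ} (N : Matrix (Fin 6) (Fin 6) (CPoly n)) : Prop :=
  ∀ i j : Fin 6, (i : ℕ) ≤ 2 → (j : ℕ) ≤ 2 → N i j = 0

/-- Comaschi format NSS₁: `m_{0j} = 0` for all `j`. -/
def FormNSS1 {n : ℕ} (N : Matrix (Fin 6) (Fin 6) (CPoly n)) : Prop :=
  ∀ j : Fin 6, N 0 j = 0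

/-- Comaschi format NSS₂: `m_{ij} = 0` for all `i ∈ {0,1}`, `j ∈ {0,1,2,3,4}`. -/
def FormNSS2 {n : ℕ} (N : Matrix (Fin 6) (Fin 6) (CPoly n)) : Prop :=
  ∀ i j : Fin 6, (i : ℕ) ≤ 1 → (j : ℕ) ≤ 4 → N i j = 0

/-- Comaschi format NSS₃: `m_{ij} = 0` for all `i, j ∈ {0,1,2,3}`. -/
def FormNSS3 {n : ℕ} (N : Matrix (Fin 6) (Fin 6) (CPoly n)) : Prop :=
  ∀ i j : Fin 6, (i : ℕ) ≤ 3 → (j : ℕ) ≤ 3 → N i j = 0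


set_option maxRecDepth 20000
set_option maxHeartbeats 1600000

@[simp] theorem cons_val_four' {α} (a b c d e f : α) : ![a,b,c,d,e,f] 4 = e := rfl
@[simp] theorem cons_val_five' {α} (a b c d e f : α) : ![a,b,c,d,e,f] 5 = f := rfl

theorem Congr_Congr {k n : ℕ} (S T : Matrix (Fin k) (Fin k) ℂ)
    (M : Matrix (Fin k) (Fin k) (CPoly n)) :
    Congr S (Congr T M) = Congr (S * T) M := by
  simp only [Congr, Matrix.map_mul, Matrix.transpose_mul, mul_assoc]

theorem Congr_apply {n : ℕ} (S : Matrix (Fin 6) (Fin 6) ℂ) (M : Matrix (Fin 6) (Fin 6) (CPoly n))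
    (i j : Fin 6) :
    Congr S M i j = ∑ k, ∑ l, C (S i k) * M k l * C (S j l) := by
  simp [Congr, Matrix.mul_apply, Finset.sum_mul]
  rw [Finset.sum_comm]

theorem IsSkewMat_Congr {k n : ℕ} (S : Matrix (Fin k) (Fin k) ℂ)
    {M : Matrix (Fin k) (Fin k) (CPoly n)} (h : IsSkewMat M) : IsSkewMat (Congr S M) := by
  have ht : (Congr S M)ᵀ = -(Congr S M) := by
    simp only [Congr, Matrix.transpose_mul, Matrix.transpose_transpose, h.1, Matrix.mul_neg,
      Matrix.neg_mul, mul_assoc]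
  refine ⟨ht, fun i => ?_⟩
  have := congrFun (congrFun ht i) i
  simp only [Matrix.transpose_apply, Matrix.neg_apply] at this
  exact add_self_eq_zero.mp (by linear_combination this)

theorem LinForms_Congr {n : ℕ} (S : Matrix (Fin 6) (Fin 6) ℂ)
    {M : Matrix (Fin 6) (Fin 6) (CPoly n)} (h : LinForms M) : LinForms (Congr S M) := by
  intro i j
  rw [Congr_apply]
  refine IsHomogeneous.sum _ _ _ fun k _ => IsHomogeneous.sum _ _ _ fun l _ => ?_
  exact ((isHomogeneous_C _ _).mul (h k l)).mul (isHomogeneous_C _ _)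

/-- A generic matrix shape used to build congruences killing the first row. -/
def Sg (a b c d e f g h i : ℂ) : Matrix (Fin 6) (Fin 6) ℂ :=
  !![a,b,c,0,0,0; d,e,f,0,0,0; 0,0,0,1,0,0; 0,0,0,0,1,0; 0,0,0,0,0,1; g,h,i,0,0,0]

theorem gdet (a b c d e f g h i : ℂ) :
    (Sg a b c d e f g h i).det = -(!![a,b,c;d,e,f;g,h,i]).det := by
  simp [Sg, Matrix.det_succ_row_zero, Fin.sum_univ_succ, Fin.succAbove,
    Matrix.det_fin_three]
  ring

section
variable {n : ℕ} (N : Matrix (Fin 6) (Fin 6) (CPoly n)) (a b c d e f g h i : ℂ)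

theorem g00 : Congr (Sg a b c d e f g h i) N 0 0 =
    C a*N 0 0*C a + C a*N 0 1*C b + C a*N 0 2*C c + C b*N 1 0*C a + C b*N 1 1*C b
      + C b*N 1 2*C c + C c*N 2 0*C a + C c*N 2 1*C b + C c*N 2 2*C c := by
  rw [Congr_apply]; simp [Sg, Fin.sum_univ_six]; ring

theorem g01 : Congr (Sg a b c d e f g h i) N 0 1 =
    C a*N 0 0*C d + C a*N 0 1*C e + C a*N 0 2*C f + C b*N 1 0*C d + C b*N 1 1*C e
      + C b*N 1 2*C f + C c*N 2 0*C d + C c*N 2 1*C e + C c*N 2 2*C f := by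
  rw [Congr_apply]; simp [Sg, Fin.sum_univ_six]; ring

theorem g02 : Congr (Sg a b c d e f g h i) N 0 2 = C a*N 0 3 + C b*N 1 3 + C c*N 2 3 := by
  rw [Congr_apply]; simp [Sg, Fin.sum_univ_six]

theorem g03 : Congr (Sg a b c d e f g h i) N 0 3 = C a*N 0 4 + C b*N 1 4 + C c*N 2 4 := by
  rw [Congr_apply]; simp [Sg, Fin.sum_univ_six]

theorem g04 : Congr (Sg a b c d e f g h i) N 0 4 = C a*N 0 5 + C b*N 1 5 + C c*N 2 5 := by
  rw [Congr_apply]; simp [Sg, Fin.sum_univ_six]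
end

/-- If the three upper entries of the top-left block of a skew matrix of format (d) satisfy a
nontrivial linear relation, the matrix has skew format NS₁. -/
theorem key {n : ℕ} (N : Matrix (Fin 6) (Fin 6) (CPoly n)) (hD : FormD N) (hsk : IsSkewMat N)
    (α β γ : ℂ) (hne : ¬(α = 0 ∧ β = 0 ∧ γ = 0))
    (hrel : C α * N 0 1 + C β * N 0 2 + C γ * N 1 2 = 0) : HasFmt FormNS1 N := by
  have hs : ∀ i j : Fin 6, N j i = -(N i j) := fun i j => by
    have := congrFun (congrFun hsk.1 i) j
    simpa [Matrix.transpose_apply] using this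
  have h10 := hs 0 1; have h20 := hs 0 2; have h21 := hs 1 2
  have h00 := hsk.2 0; have h11 := hsk.2 1; have h22 := hsk.2 2
  have d : ∀ (i j : Fin 6), (i:ℕ) ≤ 2 → 3 ≤ (j:ℕ) → N i j = 0 :=
    fun i j h1 h2 => hD i j (Or.inl ⟨h1, h2⟩)
  have d03 := d 0 3 (by decide) (by decide); have d04 := d 0 4 (by decide) (by decide)
  have d05 := d 0 5 (by decide) (by decide); have d13 := d 1 3 (by decide) (by decide)
  have d14 := d 1 4 (by decide) (by decide); have d15 := d 1 5 (by decide) (by decide)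
  have d23 := d 2 3 (by decide) (by decide); have d24 := d 2 4 (by decide) (by decide)
  have d25 := d 2 5 (by decide) (by decide)
  by_cases hγ : γ = 0
  · by_cases hβ : β = 0
    · -- α ≠ 0 : here N 0 1 = 0 already
      have hα : α ≠ 0 := fun h => hne ⟨h, hβ, hγ⟩
      subst hβ; subst hγ
      simp only [map_zero, zero_mul, add_zero] at hrel
      have h01 : N 0 1 = 0 := by
        rcases mul_eq_zero.mp hrel with h | h
        · exact absurd (MvPolynomial.C_eq_zero.mp h) hα
        · exact h
      refine ⟨Sg 0 1 0 1 0 0 0 0 1, ?_, ?_⟩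
      · rw [gdet]
        apply isUnit_iff_ne_zero.mpr
        simp [Matrix.det_fin_three, Matrix.vecHead, Matrix.vecTail]
      · intro j hj
        fin_cases j
        · refine (g00 N _ _ _ _ _ _ _ _ _).trans ?_; simp [h11]
        · refine (g01 N _ _ _ _ _ _ _ _ _).trans ?_; simp [h10, h01]
        · refine (g02 N _ _ _ _ _ _ _ _ _).trans ?_; simp [d13]
        · refine (g03 N _ _ _ _ _ _ _ _ _).trans ?_; simp [d14]
        · refine (g04 N _ _ _ _ _ _ _ _ _).trans ?_; simp [d15]
        · exact absurd hj (by decide)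
    · -- β ≠ 0, γ = 0
      subst hγ
      simp only [map_zero, zero_mul, add_zero] at hrel
      refine ⟨Sg 0 α β 1 α β 0 (-1) 0, ?_, ?_⟩
      · rw [gdet]
        apply isUnit_iff_ne_zero.mpr
        simp [Matrix.det_fin_three, Matrix.vecHead, Matrix.vecTail, hβ]
      · intro j hj
        fin_cases j
        · refine (g00 N _ _ _ _ _ _ _ _ _).trans ?_; simp only [_root_.map_zero, _root_.map_one, _root_.map_neg, zero_mul, mul_zero, one_mul, mul_one,
            add_zero, zero_add, h10, h20, h21, h00, h11, h22]
          try ring1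
        · refine (g01 N _ _ _ _ _ _ _ _ _).trans ?_; simp only [_root_.map_zero, _root_.map_one, _root_.map_neg, zero_mul, mul_zero, one_mul, mul_one,
            add_zero, zero_add, h10, h20, h21, h00, h11, h22]
          first
            | ring1
            | linear_combination (-1 : CPoly n) * hrel
            | linear_combination (-2 : CPoly n) * hrel
        · refine (g02 N _ _ _ _ _ _ _ _ _).trans ?_; simp [d13, d23]
        · refine (g03 N _ _ _ _ _ _ _ _ _).trans ?_; simp [d14, d24]
        · refine (g04 N _ _ _ _ _ _ _ _ _).trans ?_; simp [d15, d25]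
        · exact absurd hj (by decide)
  · -- γ ≠ 0
    refine ⟨Sg (-α) 0 γ β γ 0 1 0 0, ?_, ?_⟩
    · rw [gdet]
      apply isUnit_iff_ne_zero.mpr
      simp [Matrix.det_fin_three, Matrix.vecHead, Matrix.vecTail, hγ]
    · intro j hj
      fin_cases j
      · refine (g00 N _ _ _ _ _ _ _ _ _).trans ?_; simp only [_root_.map_zero, _root_.map_one, _root_.map_neg, zero_mul, mul_zero, one_mul, mul_one,
          add_zero, zero_add, neg_mul, mul_neg, h10, h20, h21, h00, h11, h22]
        try ring1
      · refine (g01 N _ _ _ _ _ _ _ _ _).trans ?_; simp only [_root_.map_zero, _root_.map_one, _root_.map_neg, zero_mul, mul_zero, one_mul, mul_one,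
          add_zero, zero_add, neg_mul, mul_neg, h10, h20, h21, h00, h11, h22]
        first
          | ring1
          | linear_combination (-(C γ) : CPoly n) * hrel
          | linear_combination (-2 * C γ : CPoly n) * hrel
          | linear_combination ((C γ) : CPoly n) * hrel
          | linear_combination (2 * C γ : CPoly n) * hrel
      · refine (g02 N _ _ _ _ _ _ _ _ _).trans ?_; simp [d03, d23]
      · refine (g03 N _ _ _ _ _ _ _ _ _).trans ?_; simp [d04, d24]
      · refine (g04 N _ _ _ _ _ _ _ _ _).trans ?_; simp [d05, d25]
      · exact absurd hj (by decide)

/-- The block-swap permutation. -/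
def sw : Equiv.Perm (Fin 6) :=
  (Equiv.swap 0 3).trans ((Equiv.swap 1 4).trans (Equiv.swap 2 5))

/-- The block-swap permutation matrix. -/
def Jmat : Matrix (Fin 6) (Fin 6) ℂ := sw.toPEquiv.toMatrix

theorem Jmat_det_isUnit : IsUnit Jmat.det := by
  rw [Jmat, Matrix.det_permutation]
  exact (Equiv.Perm.sign sw).isUnit.map (Int.castRingHom ℂ)

theorem Congr_Jmat {n : ℕ} (N : Matrix (Fin 6) (Fin 6) (CPoly n)) :
    Congr Jmat N = N.submatrix sw sw := by
  have hmap : Jmat.map (C : ℂ → CPoly n) = sw.toPEquiv.toMatrix := by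
    ext i j
    simp [Jmat, PEquiv.toMatrix_apply, apply_ite (C : ℂ → CPoly n)]
  rw [Congr, hmap, PEquiv.toMatrix_toPEquiv_mul, ← PEquiv.toMatrix_symm, ← Equiv.toPEquiv_symm,
    PEquiv.mul_toMatrix_toPEquiv]
  simp [Matrix.submatrix_submatrix]

theorem keyB {n : ℕ} (N : Matrix (Fin 6) (Fin 6) (CPoly n)) (hD : FormD N) (hsk : IsSkewMat N)
    (α β γ : ℂ) (hne : ¬(α = 0 ∧ β = 0 ∧ γ = 0))
    (hrel : C α * N 3 4 + C β * N 3 5 + C γ * N 4 5 = 0) : HasFmt FormNS1 N := by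
  have hsub := Congr_Jmat N
  have hDJ : FormD (Congr Jmat N) := by
    rw [hsub]
    intro i j hij
    exact hD _ _ (by revert hij; fin_cases i <;> fin_cases j <;> decide)
  have hskJ := IsSkewMat_Congr Jmat hsk
  have e0 : sw 0 = 3 := by decide
  have e1 : sw 1 = 4 := by decide
  have e2 : sw 2 = 5 := by decide
  have hrelJ : C α * (Congr Jmat N) 0 1 + C β * (Congr Jmat N) 0 2
      + C γ * (Congr Jmat N) 1 2 = 0 := by
    rw [hsub]
    simp only [Matrix.submatrix_apply, e0, e1, e2]
    exact hrel
  obtain ⟨S, hS, hP⟩ := key (Congr Jmat N) hDJ hskJ α β γ hne hrelJ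
  rw [Congr_Congr] at hP
  exact ⟨S * Jmat, by rw [Matrix.det_mul]; exact hS.mul Jmat_det_isUnit, hP⟩

/-- Normal form for stable skew-symmetric `6×6` matrices of linear forms of format (d). -/
theorem statement7 {n : ℕ} (hn : 1 ≤ n) (M : Matrix (Fin 6) (Fin 6) (CPoly n))
    (hlin : LinForms M) (hskew : IsSkewMat M)
    (hfmtD : HasFmt FormD M)
    (hns1 : ¬ HasFmt FormNS1 M) (hns2 : ¬ HasFmt FormNS2 M) (hns3 : ¬ HasFmt FormNS3 M) :
    ∃ (S : Matrix (Fin 6) (Fin 6) ℂ) (l m : Fin 3 → CPoly n),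
      IsUnit S.det ∧
      (∀ i, (l i).IsHomogeneous 1) ∧ (∀ i, (m i).IsHomogeneous 1) ∧
      LinearIndependent ℂ l ∧ LinearIndependent ℂ m ∧
      Congr S M =
        blk !![0, l 0, l 1; -(l 0), 0, l 2; -(l 1), -(l 2), 0] 0 0
            !![0, m 0, m 1; -(m 0), 0, m 2; -(m 1), -(m 2), 0] := by
  obtain ⟨S₀, hS₀, hDN⟩ := hfmtD
  set N := Congr S₀ M with hN
  have hskN : IsSkewMat N := IsSkewMat_Congr S₀ hskew
  have hliN : LinForms N := LinForms_Congr S₀ hlin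
  have hsymm : ∀ i j : Fin 6, N j i = -(N i j) := fun i j => by
    have := congrFun (congrFun hskN.1 i) j
    simpa using this
  have transfer : HasFmt FormNS1 N → False := by
    rintro ⟨S, hS, hP⟩
    refine hns1 ⟨S * S₀, by rw [Matrix.det_mul]; exact hS.mul hS₀, ?_⟩
    rw [← Congr_Congr, ← hN]
    exact hP
  have indep1 : LinearIndependent ℂ ![N 0 1, N 0 2, N 1 2] := by
    by_contra hdep
    obtain ⟨g, hsum, i, hgi⟩ := Fintype.not_linearIndependent_iff.mp hdep
    refine transfer (key N hDN hskN (g 0) (g 1) (g 2) ?_ ?_)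
    · rintro ⟨h0, h1, h2⟩; fin_cases i
      exacts [hgi h0, hgi h1, hgi h2]
    · simp [Fin.sum_univ_three, MvPolynomial.smul_eq_C_mul] at hsum
      linear_combination hsum
  have indep2 : LinearIndependent ℂ ![N 3 4, N 3 5, N 4 5] := by
    by_contra hdep
    obtain ⟨g, hsum, i, hgi⟩ := Fintype.not_linearIndependent_iff.mp hdep
    refine transfer (keyB N hDN hskN (g 0) (g 1) (g 2) ?_ ?_)
    · rintro ⟨h0, h1, h2⟩; fin_cases i
      exacts [hgi h0, hgi h1, hgi h2]
    · simp [Fin.sum_univ_three, MvPolynomial.smul_eq_C_mul] at hsum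
      linear_combination hsum
  refine ⟨S₀, ![N 0 1, N 0 2, N 1 2], ![N 3 4, N 3 5, N 4 5], hS₀, ?_, ?_, indep1, indep2, ?_⟩
  · intro i; fin_cases i <;> exact hliN _ _
  · intro i; fin_cases i <;> exact hliN _ _
  · have z03 : N 0 3 = 0 := hDN 0 3 (by decide)
    have z04 : N 0 4 = 0 := hDN 0 4 (by decide)
    have z05 : N 0 5 = 0 := hDN 0 5 (by decide)
    have z13 : N 1 3 = 0 := hDN 1 3 (by decide)
    have z14 : N 1 4 = 0 := hDN 1 4 (by decide)
    have z15 : N 1 5 = 0 := hDN 1 5 (by decide)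
    have z23 : N 2 3 = 0 := hDN 2 3 (by decide)
    have z24 : N 2 4 = 0 := hDN 2 4 (by decide)
    have z25 : N 2 5 = 0 := hDN 2 5 (by decide)
    have z30 : N 3 0 = 0 := hDN 3 0 (by decide)
    have z31 : N 3 1 = 0 := hDN 3 1 (by decide)
    have z32 : N 3 2 = 0 := hDN 3 2 (by decide)
    have z40 : N 4 0 = 0 := hDN 4 0 (by decide)
    have z41 : N 4 1 = 0 := hDN 4 1 (by decide)
    have z42 : N 4 2 = 0 := hDN 4 2 (by decide)
    have z50 : N 5 0 = 0 := hDN 5 0 (by decide)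
    have z51 : N 5 1 = 0 := hDN 5 1 (by decide)
    have z52 : N 5 2 = 0 := hDN 5 2 (by decide)
    refine Matrix.ext fun i j => ?_
    fin_cases i <;> fin_cases j
    exacts [hskN.2 0, rfl, rfl, z03, z04, z05,
      hsymm 0 1, hskN.2 1, rfl, z13, z14, z15,
      hsymm 0 2, hsymm 1 2, hskN.2 2, z23, z24, z25,
      z30, z31, z32, hskN.2 3, rfl, rfl,
      z40, z41, z42, hsymm 3 4, hskN.2 4, rfl,
      z50, z51, z52, hsymm 3 5, hsymm 4 5, hskN.2 5]
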